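/- Let T_ρ(x)=x+ρ mod 1 be the rotation of the circle with ρ irrational of bounded type, and choose z̃₀∈S¹ such that the orbits O_{T_ρ}(x̃₀) and O_{T_ρ}(z̃₀) are disjoint. Then there exists a subsequence (n_m) of the integers and constants 0<c<C<1 such that for every m and every 0≤k<q_{n_m+1}, the barycentric coefficient of z̃_k=T_ρ^k(z̃₀) in the interval Ĩ^{(n_m)}(z̃_k) of the dynamical partition P_{n_m}(T_ρ,x̃₀) containing it lies in [c,C]; equivalently, both connected components of Ĩ^{(n_m)}(z̃_k)∖{z̃_k} have length at least a universal positive fraction of |Ĩ^{(n_m)}(z̃_k)|. -/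

import Mathlib

open MeasureTheory Filter Set

noncomputable section

/-- Iterates of the Gauss map, starting from `ρ`. -/
def gaussIter (ρ : ℝ) : ℕ → ℝ := fun n => (fun x : ℝ => Int.fract x⁻¹)^[n] ρ

/-- Partial quotients of the continued fraction of `ρ ∈ (0,1)`: `cfK ρ n = k_{n+1}`. -/
def cfK (ρ : ℝ) (n : ℕ) : ℕ := ⌊(gaussIter ρ n)⁻¹⌋₊

/-- Denominators of the convergents of `ρ` (the first return times `q_n`). -/
def cfDen (ρ : ℝ) : ℕ → ℕ
  | 0 => 1
  | 1 => cfK ρ 0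
  | (n+2) => cfK ρ (n+1) * cfDen ρ (n+1) + cfDen ρ n

/-- `ρ` has continued fraction expansion `[k₁,…,k_m,1,1,…]`. -/
def EventuallyGolden (ρ : ℝ) (m : ℕ) : Prop := 1 ≤ m ∧ ∀ i, m ≤ i → cfK ρ i = 1

/-- `ρ` is of bounded type (bounded partial quotients). -/
def BoundedType (ρ : ℝ) : Prop := ∃ M : ℕ, ∀ i, cfK ρ i ≤ M

/-- `a` and `b` represent the same point of the circle `ℝ/ℤ`. -/
def ceq (a b : ℝ) : Prop := ∃ j : ℤ, a - b = (j : ℝ)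

/-- The point of the circle represented by `z` has a representative in `J`. -/
def memC (z : ℝ) (J : Set ℝ) : Prop := ∃ j : ℤ, z + (j : ℝ) ∈ J

/-- Inclusion of subsets of the circle (via representatives). -/
def subC (A B : Set ℝ) : Prop := ∀ z ∈ A, ∃ j : ℤ, z + (j : ℝ) ∈ B

/-- `T` is (a lift of) an orientation preserving circle homeomorphism. -/
def IsCircleHomeo (T : ℝ → ℝ) : Prop :=
  StrictMono T ∧ Continuous T ∧ ∀ x, T (x + 1) = T x + 1

/-- `T` has rotation number `ρ`. -/
def HasRotNum (T : ℝ → ℝ) (ρ : ℝ) : Prop :=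
  ∀ x : ℝ, Tendsto (fun n : ℕ => (T^[n] x - x) / (n : ℝ)) atTop (nhds ρ)

/-- Length (Lebesgue measure) of a set of reals. -/
def len (J : Set ℝ) : ℝ := (volume J).toReal

/-- The generator `I_0^{(n)}(z)`: the arc between `z` and `T^{q_n}(z)`,
written in the lift as the interval between `z` and the representative of
`T^{q_n}(z)` nearest to `z`. -/
def fundI (T : ℝ → ℝ) (qn : ℕ) (z : ℝ) : Set ℝ :=
  Set.uIcc z (T^[qn] z - (round (T^[qn] z - z) : ℝ))

/-- `J` is an element of the `n`-th dynamical partition `P_n(T,z)`. -/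
def IsPartElem (T : ℝ → ℝ) (q : ℕ → ℕ) (n : ℕ) (z : ℝ) (J : Set ℝ) : Prop :=
  (∃ i < q (n+1), J = T^[i] '' fundI T (q n) z) ∨
  (∃ j < q n, J = T^[j] '' fundI T (q (n+1)) z)

/-- The Lyapunov function `Λ_s(z,n)`. -/
def Lam (T : ℝ → ℝ) (s : ℝ) (z : ℝ) (n : ℕ) : ℝ :=
  1 + ∑ k ∈ Finset.Ico 1 n, ∏ j ∈ Finset.Ico k n, |deriv T (T^[j] z)| ^ s

/-- The Lyapunov function `Λ̂(z,n)`. -/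
def Lhat (T : ℝ → ℝ) (z : ℝ) (n : ℕ) : ℝ :=
  sSup ((fun i => ∑ k ∈ Finset.Icc 1 i, ∏ j ∈ Finset.Icc k i, |deriv T (T^[j] z)|) '' Set.Ico 1 n)

/-- `T` is `C^{2+ε}` away from the break point `xb`. -/
def BreakSmooth (T : ℝ → ℝ) (xb : ℝ) : Prop :=
  ∃ ε > (0:ℝ), ∃ H : ℝ, ContDiffOn ℝ 2 T (Set.Ioo xb (xb + 1)) ∧
    ∀ x ∈ Set.Ioo xb (xb + 1), ∀ y ∈ Set.Ioo xb (xb + 1),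
      |deriv (deriv T) x - deriv (deriv T) y| ≤ H * |x - y| ^ ε

/-- `xb` is a break point of `T` with one-sided derivatives `dL` and `dR`. -/
def IsBreakPoint (T : ℝ → ℝ) (xb dL dR : ℝ) : Prop :=
  0 < dL ∧ 0 < dR ∧ dL ≠ dR ∧
    HasDerivWithinAt T dL (Set.Iic xb) xb ∧ HasDerivWithinAt T dR (Set.Ici xb) xb

/-- The Denjoy constant `v = Var(log T') + 2|log c_T(x_b)|`. -/
def vConst (T : ℝ → ℝ) (xb dL dR : ℝ) : ℝ :=
  (eVariationOn (fun y => Real.log (deriv T y)) (Set.Icc xb (xb + 1))).toReal +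
    2 * |Real.log (Real.sqrt (dL / dR))|

/-- θ₊ = (1+e^v)^{-1/2}. -/
def thetaP (v : ℝ) : ℝ := (1 + Real.exp v) ^ (-(1/2 : ℝ))

/-- θ₋ = (1+e^{-v})^{-1/2}. -/
def thetaM (v : ℝ) : ℝ := (1 + Real.exp (-v)) ^ (-(1/2 : ℝ))

/-- The forward orbit of `z` never hits the circle point of `xb`
(equivalently, `z` is not in the backward orbit of `xb`), up to time `N`. -/
def AvoidBreak (T : ℝ → ℝ) (xb z : ℝ) (N : ℕ) : Prop := ∀ i < N, ¬ ceq (T^[i] z) xb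

/-- `z` does not belong to the backward orbit `{T^i(xb) : i = 0,-1,-2,…}`. -/
def OffOrbit (T : ℝ → ℝ) (xb z : ℝ) : Prop := ∀ i : ℕ, ¬ ceq (T^[i] z) xb

/-- The (full) orbits of `z` and `x` under the invertible map `T` are disjoint. -/
def OrbitsDisjoint (T : ℝ → ℝ) (z x : ℝ) : Prop := ∀ i j : ℕ, ¬ ceq (T^[i] z) (T^[j] x)

/-- Hypotheses of Denjoy's inequality: circle homeomorphism with one break point,
`log T'` of bounded variation, jump ratio `≠ 1`, irrational rotation number. -/
def DenjoyHyp (T : ℝ → ℝ) (xb dL dR ρ : ℝ) : Prop :=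
  IsCircleHomeo T ∧ IsBreakPoint T xb dL dR ∧
  ContDiffOn ℝ 1 T (Set.Ioo xb (xb + 1)) ∧
  eVariationOn (fun y => Real.log (deriv T y)) (Set.Icc xb (xb + 1)) ≠ ⊤ ∧
  HasRotNum T ρ ∧ Irrational ρ ∧ ρ ∈ Set.Ioo (0:ℝ) 1

/-- The standing hypotheses of the main theorem:
`T ∈ C^{2+ε}(S¹∖{x_b})`, one break point, `T' ≥ const > 0`,
rotation number `ρ_T = [k₁,…,k_m,1,1,…]`. -/
def MainHyp (T : ℝ → ℝ) (xb dL dR ρ : ℝ) (m : ℕ) : Prop :=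
  IsCircleHomeo T ∧ BreakSmooth T xb ∧ IsBreakPoint T xb dL dR ∧
  (∃ c > (0:ℝ), ∀ x ∈ Set.Ioo xb (xb + 1), c ≤ deriv T x) ∧
  HasRotNum T ρ ∧ Irrational ρ ∧ ρ ∈ Set.Ioo (0:ℝ) 1 ∧ EventuallyGolden ρ m

/-- The stochastic sequence `z̄_{n+1} = T(z̄_n) + σ ξ_{n+1}`, `z̄₀ = z₀`. -/
def zbar {Ω : Type*} (T : ℝ → ℝ) (ξ : ℕ → Ω → ℝ) (σ z₀ : ℝ) : ℕ → Ω → ℝ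
  | 0 => fun _ => z₀
  | (n+1) => fun ω => T (zbar T ξ σ z₀ n ω) + σ * ξ (n+1) ω

/-- The linearized effective noise `L_n(z₀)`. -/
def Lproc {Ω : Type*} (T : ℝ → ℝ) (ξ : ℕ → Ω → ℝ) (z₀ : ℝ) (n : ℕ) (ω : Ω) : ℝ :=
  ξ n ω + ∑ k ∈ Finset.Ico 1 n, ξ k ω * ∏ j ∈ Finset.Ico k n, deriv T (T^[j] z₀)

/-- The normalized process `ω_n(z₀,σ)`. -/
def omegaProc {Ω : Type*} [MeasurableSpace Ω] (P : Measure Ω) (T : ℝ → ℝ)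
    (ξ : ℕ → Ω → ℝ) (σ z₀ : ℝ) (n : ℕ) (ω : Ω) : ℝ :=
  (zbar T ξ σ z₀ n ω - T^[n] z₀) /
    (σ * Real.sqrt (ProbabilityTheory.variance (Lproc T ξ z₀ n) P))

/-- The distribution function of the standard Gaussian. -/
def stdGaussCdf (z : ℝ) : ℝ := ((ProbabilityTheory.gaussianReal 0 1) (Set.Iic z)).toReal

/-- The noise conditions: independent, mean zero, comparable `p`-th moments. -/
def NoiseHyp {Ω : Type*} [MeasurableSpace Ω] (P : Measure Ω) (ξ : ℕ → Ω → ℝ) (p : ℝ) : Prop :=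
  (∀ n, Measurable (ξ n)) ∧
  ProbabilityTheory.iIndepFun ξ P ∧
  (∀ n, Integrable (ξ n) P) ∧
  (∀ n, Integrable (fun ω => |ξ n ω| ^ p) P) ∧
  (∀ n, ∫ ω, ξ n ω ∂P = 0) ∧
  ∃ c C : ℝ, 0 < c ∧
    (∀ n, c ≤ (∫ ω, |ξ n ω| ^ (2:ℝ) ∂P) ^ ((1:ℝ)/2)) ∧
    (∀ n, (∫ ω, |ξ n ω| ^ (2:ℝ) ∂P) ^ ((1:ℝ)/2) ≤ (∫ ω, |ξ n ω| ^ p ∂P) ^ (1/p)) ∧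
    (∀ n, (∫ ω, |ξ n ω| ^ p ∂P) ^ (1/p) ≤ C)


/-- The closed arc of the circle from `a` to (the representative nearest `a` of) `b`. -/
def cArc (a b : ℝ) : Set ℝ :=
  {z | ∃ j : ℤ, z + (j : ℝ) ∈ Set.uIcc a (b - (round (b - a) : ℝ))}

/-- The half-open arc of the circle from `a` to `b`, containing `a` but not `b`. -/
def cArcHalf (a b : ℝ) : Set ℝ :=
  {z | ∃ j : ℤ, z + (j : ℝ) ∈ Set.uIcc a (b - (round (b - a) : ℝ)) ∧
        z + (j : ℝ) ≠ b - (round (b - a) : ℝ)}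

/-- `Ĩ^{(lvl)}_i(x̃₀) = T_ρ^i` of the closed arc with endpoints `x̃₀` and `x̃_{q_lvl}`. -/
def rotI (ρ x0 : ℝ) (lvl i : ℕ) : Set ℝ :=
  cArc (x0 + (i : ℝ) * ρ) (x0 + (i : ℝ) * ρ + (cfDen ρ lvl : ℝ) * ρ)

/-- `T_ρ^i([x̃₀, x̃_{-q_{n+1}}))`. -/
def rotHalfA (ρ x0 : ℝ) (n i : ℕ) : Set ℝ :=
  cArcHalf (x0 + (i : ℝ) * ρ) (x0 + (i : ℝ) * ρ - (cfDen ρ (n+1) : ℝ) * ρ)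

/-- `T_ρ^i([x̃_{-q_{n+1}}, x̃_{q_n}))`. -/
def rotHalfB (ρ x0 : ℝ) (n i : ℕ) : Set ℝ :=
  cArcHalf (x0 + (i : ℝ) * ρ - (cfDen ρ (n+1) : ℝ) * ρ)
    (x0 + (i : ℝ) * ρ + (cfDen ρ n : ℝ) * ρ)

/-- `Ĩ^{(lvl)}_i(x̃₀)` as an interval in the lift: translate by `i·ρ` of the
interval between `x̃₀` and the representative of `x̃_{q_lvl}` nearest to `x̃₀`. -/
def rotElemR (ρ x0 : ℝ) (lvl i : ℕ) : Set ℝ :=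
  Set.uIcc (x0 + (i : ℝ) * ρ)
    (x0 + (i : ℝ) * ρ + (cfDen ρ lvl : ℝ) * ρ - (round ((cfDen ρ lvl : ℝ) * ρ) : ℝ))

/-- `J` is an element of the dynamical partition `P_n(T_ρ, x̃₀)`. -/
def IsRotPartElem (ρ x0 : ℝ) (n : ℕ) (J : Set ℝ) : Prop :=
  (∃ i < cfDen ρ (n+1), J = rotElemR ρ x0 n i) ∨
  (∃ j < cfDen ρ n, J = rotElemR ρ x0 (n+1) j)

/-- numerators -/
def pNum (ρ : ℝ) : ℕ → ℤ
  | 0 => 0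
  | 1 => 1
  | (n+2) => cfK ρ (n+1) * pNum ρ (n+1) + pNum ρ n

def Bprod (ρ : ℝ) (n : ℕ) : ℝ := ∏ i ∈ Finset.range n, gaussIter ρ i

section basic

variable {ρ : ℝ} (hirr : Irrational ρ) (hρ : ρ ∈ Set.Ioo (0:ℝ) 1)

lemma gaussIter_succ (n : ℕ) : gaussIter ρ (n+1) = Int.fract (gaussIter ρ n)⁻¹ := by
  simp [gaussIter, Function.iterate_succ_apply']

include hirr hρ in
lemma gauss_mem : ∀ n, Irrational (gaussIter ρ n) ∧ gaussIter ρ n ∈ Set.Ioo (0:ℝ) 1 := by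
  intro n
  induction n with
  | zero => exact ⟨hirr, hρ⟩
  | succ n ih =>
    obtain ⟨h1, h2⟩ := ih
    have hinv : Irrational (gaussIter ρ n)⁻¹ := h1.inv
    have hfr : Irrational (Int.fract (gaussIter ρ n)⁻¹) := by
      unfold Int.fract
      exact hinv.sub_intCast _
    rw [gaussIter_succ]
    refine ⟨hfr, ?_, Int.fract_lt_one _⟩
    rcases lt_or_eq_of_le (Int.fract_nonneg (gaussIter ρ n)⁻¹) with h | h
    · exact h
    · exact absurd h.symm (by simpa using hfr.ne_int 0)

include hirr hρ in
lemma cfK_pos (n : ℕ) : 1 ≤ cfK ρ n := by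
  obtain ⟨h1, h2, h3⟩ := gauss_mem hirr hρ n
  have : (1:ℝ) ≤ (gaussIter ρ n)⁻¹ := le_of_lt (by rw [lt_inv_comm₀ one_pos h2]; simpa using h3)
  exact Nat.le_floor (by exact_mod_cast this)

include hirr hρ in
lemma cfK_cast (n : ℕ) : ((cfK ρ n : ℤ) : ℝ) = ⌊(gaussIter ρ n)⁻¹⌋ := by
  have h2 := (gauss_mem hirr hρ n).2.1
  rw [cfK]
  exact_mod_cast congrArg (Int.cast : ℤ → ℝ) (Int.natCast_floor_eq_floor (le_of_lt (inv_pos.2 h2)))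

include hirr hρ in
lemma gauss_rec (n : ℕ) :
    gaussIter ρ n * gaussIter ρ (n+1) = 1 - (cfK ρ n : ℝ) * gaussIter ρ n := by
  have h2 := (gauss_mem hirr hρ n).2.1
  have hne : gaussIter ρ n ≠ 0 := ne_of_gt h2
  have hc : ((cfK ρ n : ℤ) : ℝ) = ⌊(gaussIter ρ n)⁻¹⌋ := cfK_cast hirr hρ n
  rw [gaussIter_succ, Int.fract]
  push_cast at hc ⊢
  rw [← hc]
  field_simp

end basic
section bprod

variable {ρ : ℝ} (hirr : Irrational ρ) (hρ : ρ ∈ Set.Ioo (0:ℝ) 1)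

lemma Bprod_succ (n : ℕ) : Bprod ρ (n+1) = Bprod ρ n * gaussIter ρ n :=
  Finset.prod_range_succ _ _

include hirr hρ in
lemma Bprod_pos (n : ℕ) : 0 < Bprod ρ n := by
  refine Finset.prod_pos fun i _ => (gauss_mem hirr hρ i).2.1

include hirr hρ in
lemma Bprod_anti {k m : ℕ} (h : k ≤ m) : Bprod ρ m ≤ Bprod ρ k := by
  induction m with
  | zero => simp_all
  | succ m ih =>
    rcases Nat.lt_or_ge k (m+1) with h' | h'
    · have := ih (Nat.lt_succ_iff.1 h')
      refine le_trans ?_ this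
      rw [Bprod_succ]
      nlinarith [Bprod_pos hirr hρ m, (gauss_mem hirr hρ m).2.2, (gauss_mem hirr hρ m).2.1]
    · have : k = m + 1 := le_antisymm h h'
      simp [this]

include hirr hρ in
lemma Bprod_half (k : ℕ) : Bprod ρ (2*k) ≤ (1/2:ℝ)^k := by
  induction k with
  | zero => simp [Bprod]
  | succ k ih =>
    have hx := (gauss_mem hirr hρ (2*k)).2
    have hx' := (gauss_mem hirr hρ (2*k+1)).2
    have hrec := gauss_rec hirr hρ (2*k)
    have hK : (1:ℝ) ≤ (cfK ρ (2*k) : ℝ) := by exact_mod_cast cfK_pos hirr hρ (2*k)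
    have hmul : gaussIter ρ (2*k) * gaussIter ρ (2*k+1) ≤ 1/2 := by
      rcases le_or_gt (gaussIter ρ (2*k)) (1/2) with h | h
      · nlinarith [hx.1, hx'.1, hx'.2]
      · nlinarith [hx.1]
    have h2 : 2*(k+1) = 2*k + 1 + 1 := by ring
    rw [h2, Bprod_succ, Bprod_succ]
    have hBpos := Bprod_pos hirr hρ (2*k)
    calc Bprod ρ (2*k) * gaussIter ρ (2*k) * gaussIter ρ (2*k+1)
        = Bprod ρ (2*k) * (gaussIter ρ (2*k) * gaussIter ρ (2*k+1)) := by ring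
      _ ≤ Bprod ρ (2*k) * (1/2) := by nlinarith [hx.1, hx'.1]
      _ ≤ (1/2:ℝ)^k * (1/2) := by nlinarith
      _ = (1/2:ℝ)^(k+1) := by ring

include hirr hρ in
lemma Bprod_ratio {M : ℕ} (hM : ∀ i, cfK ρ i ≤ M) (n : ℕ) :
    Bprod ρ n ≤ (M+1 : ℝ) * Bprod ρ (n+1) := by
  have hx := (gauss_mem hirr hρ n).2
  have hMx : (gaussIter ρ n)⁻¹ < (M:ℝ) + 1 := by
    have : (⌊(gaussIter ρ n)⁻¹⌋₊ : ℝ) ≤ M := by exact_mod_cast hM n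
    calc (gaussIter ρ n)⁻¹ < ⌊(gaussIter ρ n)⁻¹⌋₊ + 1 := Nat.lt_floor_add_one _
      _ ≤ (M:ℝ) + 1 := by linarith
  have hxlb : (1:ℝ)/(M+1) < gaussIter ρ n := by
    rw [div_lt_iff₀ (by positivity)]
    have := (inv_lt_iff_one_lt_mul₀ hx.1).1 hMx
    linarith [mul_comm (gaussIter ρ n) ((M:ℝ)+1)]
  rw [Bprod_succ]
  have hB := Bprod_pos hirr hρ n
  have hM1 : (0:ℝ) < (M:ℝ)+1 := by positivity
  have h1 : 1 < gaussIter ρ n * ((M:ℝ)+1) := (div_lt_iff₀ hM1).1 hxlb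
  nlinarith

include hirr hρ in
lemma Bprod_ratio_pow {M : ℕ} (hM : ∀ i, cfK ρ i ≤ M) (n d : ℕ) :
    Bprod ρ n ≤ (M+1 : ℝ)^d * Bprod ρ (n+d) := by
  induction d with
  | zero => simp
  | succ d ih =>
    have h1 := Bprod_ratio hirr hρ hM (n+d)
    have hM1 : (0:ℝ) ≤ ((M:ℝ)+1)^d := by positivity
    calc Bprod ρ n ≤ (M+1:ℝ)^d * Bprod ρ (n+d) := ih
      _ ≤ (M+1:ℝ)^d * ((M+1:ℝ) * Bprod ρ (n+d+1)) := by nlinarith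
      _ = (M+1:ℝ)^(d+1) * Bprod ρ (n+(d+1)) := by ring_nf
end bprod

section den

variable {ρ : ℝ} (hirr : Irrational ρ) (hρ : ρ ∈ Set.Ioo (0:ℝ) 1)

include hirr hρ in
lemma cfDen_pos : ∀ n, 1 ≤ cfDen ρ n := by
  intro n
  induction n using Nat.twoStepInduction with
  | zero => simp [cfDen]
  | one => simpa [cfDen] using cfK_pos hirr hρ 0
  | more n ih1 ih2 =>
    have := cfK_pos hirr hρ (n+1)
    simp only [cfDen]
    nlinarith

include hirr hρ in
lemma cfDen_mono : ∀ n, cfDen ρ n ≤ cfDen ρ (n+1) := by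
  intro n
  match n with
  | 0 => simpa [cfDen] using cfK_pos hirr hρ 0
  | (n+1) =>
    have h1 := cfDen_pos hirr hρ n
    have h2 := cfK_pos hirr hρ (n+1)
    show cfDen ρ (n+1) ≤ cfK ρ (n+1) * cfDen ρ (n+1) + cfDen ρ n
    nlinarith

include hirr hρ in
lemma cfDen_le_of_le {k m : ℕ} (h : k ≤ m) : cfDen ρ k ≤ cfDen ρ m := by
  induction m with
  | zero => simp_all
  | succ m ih =>
    rcases Nat.lt_or_ge k (m+1) with h' | h'
    · exact le_trans (ih (Nat.lt_succ_iff.1 h')) (cfDen_mono hirr hρ m)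
    · have : k = m+1 := le_antisymm h h'
      simp [this]

include hirr hρ in
lemma cfDen_two_step (n : ℕ) : 2 * cfDen ρ n ≤ cfDen ρ (n+2) := by
  have h1 := cfDen_mono hirr hρ n
  have h2 := cfK_pos hirr hρ (n+1)
  have h3 := cfDen_pos hirr hρ (n+1)
  show 2 * cfDen ρ n ≤ cfK ρ (n+1) * cfDen ρ (n+1) + cfDen ρ n
  nlinarith

include hirr hρ in
lemma cfDen_eight (n : ℕ) : 8 * cfDen ρ (n+2) ≤ cfDen ρ (n+8) := by
  have h1 : 2 * cfDen ρ (n+2) ≤ cfDen ρ (n+4) := cfDen_two_step hirr hρ (n+2)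
  have h2 : 2 * cfDen ρ (n+4) ≤ cfDen ρ (n+6) := cfDen_two_step hirr hρ (n+4)
  have h3 : 2 * cfDen ρ (n+6) ≤ cfDen ρ (n+8) := cfDen_two_step hirr hρ (n+6)
  omega

include hirr hρ in
lemma gam_eq : ∀ n, (cfDen ρ n : ℝ) * ρ - (pNum ρ n : ℝ) = (-1:ℝ)^n * Bprod ρ (n+1) := by
  intro n
  induction n using Nat.twoStepInduction with
  | zero => simp [cfDen, pNum, Bprod, gaussIter]
  | one =>
    have hρ0 : ρ ≠ 0 := ne_of_gt hρ.1
    have hc : ((cfK ρ 0 : ℤ) : ℝ) = ⌊(gaussIter ρ 0)⁻¹⌋ := cfK_cast hirr hρ 0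
    have hx1 : gaussIter ρ 1 = Int.fract (gaussIter ρ 0)⁻¹ := gaussIter_succ 0
    have h0 : gaussIter ρ 0 = ρ := rfl
    rw [h0] at hc hx1
    rw [Int.fract] at hx1
    have hk : (cfK ρ 0 : ℝ) = ρ⁻¹ - gaussIter ρ 1 := by
      push_cast at hc
      rw [hx1, ← hc]; ring
    have hB : Bprod ρ 2 = ρ * gaussIter ρ 1 := by
      simp [Bprod, Finset.prod_range_succ, h0]
    have hinv : ρ⁻¹ * ρ = 1 := inv_mul_cancel₀ hρ0
    show (cfDen ρ 1 : ℝ) * ρ - (pNum ρ 1 : ℝ) = (-1:ℝ)^1 * Bprod ρ 2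
    have hq1 : cfDen ρ 1 = cfK ρ 0 := rfl
    have hp1 : pNum ρ 1 = 1 := rfl
    rw [hq1, hp1, hk, hB]
    push_cast
    linear_combination hinv
  | more n ih1 ih2 =>
    have hrec := gauss_rec hirr hρ (n+1)
    have hB2 : Bprod ρ (n+2) = Bprod ρ (n+1) * gaussIter ρ (n+1) := Bprod_succ (n+1)
    have hB3 : Bprod ρ (n+3) = Bprod ρ (n+1) * gaussIter ρ (n+1) * gaussIter ρ (n+2) := by
      rw [Bprod_succ (n+2), hB2]
    have ih2' : (cfDen ρ (n+1) : ℝ) * ρ - (pNum ρ (n+1) : ℝ)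
        = (-1:ℝ)^(n+1) * (Bprod ρ (n+1) * gaussIter ρ (n+1)) := by
      rw [ih2]
      norm_num [hB2]
    have hcf : cfDen ρ (n+2) = cfK ρ (n+1) * cfDen ρ (n+1) + cfDen ρ n := rfl
    have hpf : pNum ρ (n+2) = cfK ρ (n+1) * pNum ρ (n+1) + pNum ρ n := rfl
    rw [hcf, hpf, hB3]
    push_cast
    have hrec' : gaussIter ρ (n+1) * gaussIter ρ (n+2)
        = 1 - (cfK ρ (n+1) : ℝ) * gaussIter ρ (n+1) := hrec
    linear_combination ((cfK ρ (n+1) : ℝ)) * ih2' + ih1 - ((-1:ℝ)^n * Bprod ρ (n+1)) * hrec'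

omit hirr hρ in
lemma det_eq : ∀ n, pNum ρ (n+1) * (cfDen ρ n : ℤ) - pNum ρ n * (cfDen ρ (n+1) : ℤ) = (-1)^n := by
  intro n
  induction n with
  | zero => simp [pNum, cfDen]
  | succ n ih =>
    have hcf : cfDen ρ (n+2) = cfK ρ (n+1) * cfDen ρ (n+1) + cfDen ρ n := rfl
    have hpf : pNum ρ (n+2) = cfK ρ (n+1) * pNum ρ (n+1) + pNum ρ n := rfl
    rw [hcf, hpf]
    push_cast
    rw [pow_succ]
    nlinarith [ih]

end den
lemma abs_le_abs_add_of_mul_nonneg {α : Type*} [CommRing α] [LinearOrder α] [IsStrictOrderedRing α] {a b : α}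
    (h : 0 ≤ a * b) : |b| ≤ |a + b| := by
  rcases le_total 0 b with hb | hb <;> rcases le_total 0 a with ha | ha
  · rw [abs_of_nonneg hb, abs_of_nonneg (by linarith)]; linarith
  · rcases mul_eq_zero.1 (le_antisymm (mul_nonpos_of_nonpos_of_nonneg ha hb) h) with h0 | h0
    · rw [h0, zero_add]
    · simp [h0]
  · rcases mul_eq_zero.1 (le_antisymm (mul_nonpos_of_nonneg_of_nonpos ha hb) h) with h0 | h0
    · rw [h0, zero_add]
    · simp [h0]
  · rw [abs_of_nonpos hb, abs_of_nonpos (by linarith)]; linarith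

section bestapprox

variable {ρ : ℝ} (hirr : Irrational ρ) (hρ : ρ ∈ Set.Ioo (0:ℝ) 1)

include hirr hρ in
lemma best_approx (n : ℕ) (t u : ℤ) (ht : t ≠ 0) (htlt : |t| < (cfDen ρ (n+1) : ℤ)) :
    Bprod ρ (n+1) ≤ |(t:ℝ) * ρ - (u:ℝ)| := by
  set q0 : ℤ := (cfDen ρ n : ℤ) with hq0
  set q1 : ℤ := (cfDen ρ (n+1) : ℤ) with hq1
  set p0 : ℤ := pNum ρ n with hp0
  set p1 : ℤ := pNum ρ (n+1) with hp1
  have hq0pos : 0 < q0 := by rw [hq0]; exact_mod_cast Nat.lt_of_lt_of_le Nat.zero_lt_one (cfDen_pos hirr hρ n)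
  have hq1pos : 0 < q1 := by rw [hq1]; exact_mod_cast Nat.lt_of_lt_of_le Nat.zero_lt_one (cfDen_pos hirr hρ (n+1))
  have hdet : p1 * q0 - p0 * q1 = (-1)^n := det_eq n
  set ε : ℤ := p1 * q0 - p0 * q1 with hε
  have hε2 : ε * ε = 1 := by rw [hdet, ← mul_pow]; norm_num
  set A : ℤ := ε * (p1 * t - q1 * u) with hA
  set Bc : ℤ := ε * (q0 * u - p0 * t) with hBc
  have hAt : A * q0 + Bc * q1 = t := by
    have : A * q0 + Bc * q1 = t * (ε * ε) := by rw [hA, hBc, hε]; ring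
    rw [this, hε2, mul_one]
  have hAu : A * p0 + Bc * p1 = u := by
    have : A * p0 + Bc * p1 = u * (ε * ε) := by rw [hA, hBc, hε]; ring
    rw [this, hε2, mul_one]
  -- real gamma values
  have hg0 : (q0 : ℝ) * ρ - (p0 : ℝ) = (-1:ℝ)^n * Bprod ρ (n+1) := by
    rw [hq0, hp0]; push_cast; exact_mod_cast gam_eq hirr hρ n
  have hg1 : (q1 : ℝ) * ρ - (p1 : ℝ) = (-1:ℝ)^(n+1) * Bprod ρ (n+2) := by
    rw [hq1, hp1]; push_cast; exact_mod_cast gam_eq hirr hρ (n+1)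
  have hsum : (t:ℝ) * ρ - (u:ℝ)
      = (A:ℝ) * ((q0:ℝ) * ρ - p0) + (Bc:ℝ) * ((q1:ℝ) * ρ - p1) := by
    have h1 : ((A * q0 + Bc * q1 : ℤ) : ℝ) = (t : ℝ) := by exact_mod_cast congrArg (fun z : ℤ => (z:ℝ)) hAt
    have h2 : ((A * p0 + Bc * p1 : ℤ) : ℝ) = (u : ℝ) := by exact_mod_cast congrArg (fun z : ℤ => (z:ℝ)) hAu
    push_cast at h1 h2
    linear_combination (-ρ) * h1 + h2
  have hBpos1 := Bprod_pos hirr hρ (n+1)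
  have hBpos2 := Bprod_pos hirr hρ (n+2)
  by_cases hBc0 : Bc = 0
  · -- t = A * q0, tρ - u = A * γ0
    have hA0 : A ≠ 0 := by
      intro h0
      rw [h0, hBc0] at hAt
      simp at hAt
      exact ht hAt.symm
    have hA1 : (1:ℝ) ≤ |(A:ℝ)| := by
      rw [← Int.cast_abs]
      exact_mod_cast Int.one_le_abs hA0
    rw [hsum, hBc0]
    push_cast
    rw [zero_mul, add_zero, abs_mul, hg0, abs_mul]
    rw [abs_pow, abs_neg, abs_one, one_pow, one_mul, abs_of_pos hBpos1]
    nlinarith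
  · by_cases hA0 : A = 0
    · exfalso
      rw [hA0, zero_mul, zero_add] at hAt
      have : q1 ≤ |Bc * q1| := by
        rw [abs_mul, abs_of_pos hq1pos]
        have : (1:ℤ) ≤ |Bc| := Int.one_le_abs hBc0
        nlinarith
      rw [hAt] at this
      omega
    · rcases le_or_gt 0 (A * Bc) with hsign | hsign
      · exfalso
        have hprod : 0 ≤ (A * q0) * (Bc * q1) := by
          have : (A * q0) * (Bc * q1) = (A * Bc) * (q0 * q1) := by ring
          rw [this]
          exact mul_nonneg hsign (by positivity)
        have h1 : |Bc * q1| ≤ |A * q0 + Bc * q1| := abs_le_abs_add_of_mul_nonneg hprod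
        rw [hAt] at h1
        have h2 : q1 ≤ |Bc * q1| := by
          rw [abs_mul, abs_of_pos hq1pos]
          have : (1:ℤ) ≤ |Bc| := Int.one_le_abs hBc0
          nlinarith
        omega
      · -- opposite signs: (A γ0) * (Bc γ1) ≥ 0
        have hprod : 0 ≤ ((Bc:ℝ) * ((q1:ℝ) * ρ - p1)) * ((A:ℝ) * ((q0:ℝ) * ρ - p0)) := by
          rw [hg0, hg1]
          have hAB : ((A:ℝ) * Bc) ≤ 0 := by exact_mod_cast le_of_lt hsign
          have hsgn : ((-1:ℝ)^(n+1) * Bprod ρ (n+2)) * ((-1:ℝ)^n * Bprod ρ (n+1))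
              = -(Bprod ρ (n+2) * Bprod ρ (n+1)) := by
            have : (-1:ℝ)^(n+1) * (-1:ℝ)^n = -1 := by
              rw [pow_succ, show ((-1:ℝ)^n * -1) * (-1)^n = -((-1)^n * (-1)^n) from by ring,
                ← mul_pow]
              norm_num
            linear_combination (Bprod ρ (n+2) * Bprod ρ (n+1)) * this
          have hE : ((Bc:ℝ) * ((-1:ℝ)^(n+1) * Bprod ρ (n+2))) * ((A:ℝ) * ((-1:ℝ)^n * Bprod ρ (n+1)))
              = ((A:ℝ) * Bc) * (-(Bprod ρ (n+2) * Bprod ρ (n+1))) := by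
            linear_combination ((A:ℝ) * Bc) * hsgn
          rw [hE]
          nlinarith [mul_pos hBpos2 hBpos1]
        have h1 : |(A:ℝ) * ((q0:ℝ) * ρ - p0)| ≤
            |((Bc:ℝ) * ((q1:ℝ) * ρ - p1)) + ((A:ℝ) * ((q0:ℝ) * ρ - p0))| :=
          abs_le_abs_add_of_mul_nonneg hprod
        have hA1 : (1:ℝ) ≤ |(A:ℝ)| := by
          rw [← Int.cast_abs]
          exact_mod_cast Int.one_le_abs hA0
        rw [hsum]
        have habs : |(A:ℝ) * ((q0:ℝ) * ρ - p0)| = |(A:ℝ)| * Bprod ρ (n+1) := by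
          rw [abs_mul, hg0, abs_mul, abs_pow, abs_neg, abs_one, one_pow, one_mul,
            abs_of_pos hBpos1]
        calc Bprod ρ (n+1) ≤ |(A:ℝ)| * Bprod ρ (n+1) := by nlinarith
          _ = |(A:ℝ) * ((q0:ℝ) * ρ - p0)| := habs.symm
          _ ≤ |(Bc:ℝ) * ((q1:ℝ) * ρ - p1) + (A:ℝ) * ((q0:ℝ) * ρ - p0)| := h1
          _ = |(A:ℝ) * ((q0:ℝ) * ρ - p0) + (Bc:ℝ) * ((q1:ℝ) * ρ - p1)| := by rw [add_comm]

end bestapprox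
section freq

variable {ρ : ℝ} (hirr : Irrational ρ) (hρ : ρ ∈ Set.Ioo (0:ℝ) 1)

include hirr hρ in
lemma freq_good {M : ℕ} (hM : ∀ i, cfK ρ i ≤ M) (α : ℝ)
    (hα : ∀ t j : ℤ, α + (t:ℝ) * ρ ≠ (j:ℝ)) :
    ∃ᶠ n in atTop, ∀ t : ℤ, |t| ≤ 3 * (cfDen ρ (n+1) : ℤ) →
      (1/(2*((M:ℝ)+1)^7)) * Bprod ρ (n+1)
        ≤ |α + (t:ℝ)*ρ - round (α + (t:ℝ)*ρ)| := by
  set c0 : ℝ := 1/(2*((M:ℝ)+1)^7) with hc0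
  have hM7 : (0:ℝ) < ((M:ℝ)+1)^7 := by positivity
  have hc0pos : 0 < c0 := by rw [hc0]; positivity
  by_contra hcon
  rw [Filter.not_frequently] at hcon
  obtain ⟨N, hN⟩ := Filter.eventually_atTop.1 hcon
  have Hsel : ∀ n, ∃ t : ℤ, N ≤ n → (|t| ≤ 3*(cfDen ρ (n+1):ℤ) ∧
      |α + (t:ℝ)*ρ - round (α + (t:ℝ)*ρ)| < c0 * Bprod ρ (n+1)) := by
    intro n
    by_cases h : N ≤ n
    · have hn := hN n h
      push_neg at hn
      obtain ⟨t, ht1, ht2⟩ := hn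
      exact ⟨t, fun _ => ⟨ht1, ht2⟩⟩
    · exact ⟨0, fun hc => absurd hc h⟩
  choose tt htt using Hsel
  have hstep : ∀ n, N ≤ n → tt (n+1) = tt n := by
    intro n hn
    by_contra hne
    obtain ⟨h1a, h1b⟩ := htt n hn
    obtain ⟨h2a, h2b⟩ := htt (n+1) (le_trans hn (Nat.le_succ n))
    set t : ℤ := tt (n+1) - tt n with htdef
    have ht0 : t ≠ 0 := sub_ne_zero.2 hne
    set u : ℤ := round (α + (tt (n+1):ℝ)*ρ) - round (α + (tt n:ℝ)*ρ) with hudef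
    have hd : |(t:ℝ)*ρ - (u:ℝ)| < 2 * c0 * Bprod ρ (n+1) := by
      have heq : (t:ℝ)*ρ - (u:ℝ)
          = (α + (tt (n+1):ℝ)*ρ - round (α + (tt (n+1):ℝ)*ρ))
            - (α + (tt n:ℝ)*ρ - round (α + (tt n:ℝ)*ρ)) := by
        rw [htdef, hudef]; push_cast; ring
      have hBle : Bprod ρ (n+1+1) ≤ Bprod ρ (n+1) := Bprod_anti hirr hρ (Nat.le_succ _)
      calc |(t:ℝ)*ρ - (u:ℝ)| ≤ |α + (tt (n+1):ℝ)*ρ - round (α + (tt (n+1):ℝ)*ρ)|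
            + |α + (tt n:ℝ)*ρ - round (α + (tt n:ℝ)*ρ)| := by rw [heq]; exact abs_sub _ _
        _ < c0 * Bprod ρ (n+1+1) + c0 * Bprod ρ (n+1) := by exact add_lt_add h2b h1b
        _ ≤ 2 * c0 * Bprod ρ (n+1) := by nlinarith
    have htbd : |t| < (cfDen ρ (n+7+1) : ℤ) := by
      have e1 : (cfDen ρ (n+1) : ℤ) ≤ cfDen ρ (n+2) := by exact_mod_cast cfDen_mono hirr hρ (n+1)
      have e2 : 8 * (cfDen ρ (n+2) : ℤ) ≤ cfDen ρ (n+8) := by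
        exact_mod_cast cfDen_eight hirr hρ n
      have e3 : (1:ℤ) ≤ cfDen ρ (n+2) := by exact_mod_cast cfDen_pos hirr hρ (n+2)
      have e4 : (cfDen ρ (n+7+1) : ℤ) = (cfDen ρ (n+8) : ℤ) := rfl
      have e5 : (cfDen ρ (n+1+1) : ℤ) = (cfDen ρ (n+2) : ℤ) := rfl
      rw [e4, htdef]
      have := abs_sub (tt (n+1)) (tt n)
      omega
    have hba := best_approx hirr hρ (n+7) t u ht0 htbd
    have hratio : Bprod ρ (n+1) ≤ ((M:ℝ)+1)^7 * Bprod ρ (n+8) := by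
      exact Bprod_ratio_pow hirr hρ hM (n+1) 7
    have hBB : Bprod ρ (n+7+1) = Bprod ρ (n+8) := rfl
    rw [hBB] at hba
    have h2c0 : 2 * c0 * Bprod ρ (n+1) = Bprod ρ (n+1) / (((M:ℝ)+1)^7) := by
      rw [hc0]; field_simp
    have : 2 * c0 * Bprod ρ (n+1) ≤ Bprod ρ (n+8) := by
      rw [h2c0, div_le_iff₀ hM7]
      nlinarith
    linarith
  have hconst : ∀ n, N ≤ n → tt n = tt N := by
    intro n hn
    induction n, hn using Nat.le_induction with
    | base => rfl
    | succ n hn ih => rw [hstep n hn, ih]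
  set d : ℝ := |α + (tt N:ℝ)*ρ - round (α + (tt N:ℝ)*ρ)| with hddef
  have hd0 : 0 < d := by
    rcases lt_or_eq_of_le (abs_nonneg (α + (tt N:ℝ)*ρ - round (α + (tt N:ℝ)*ρ))) with h | h
    · exact h
    · exfalso
      have : α + (tt N:ℝ)*ρ - round (α + (tt N:ℝ)*ρ) = 0 := by
        rw [← abs_eq_zero]; exact h.symm
      exact hα (tt N) (round (α + (tt N:ℝ)*ρ)) (by linarith)
  obtain ⟨k, hk⟩ := exists_pow_lt_of_lt_one (div_pos hd0 hc0pos) (by norm_num : (1/2:ℝ) < 1)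
  set n := max (2*k) N with hndef
  have hnN : N ≤ n := le_max_right _ _
  have h1 : d < c0 * Bprod ρ (n+1) := by
    have := (htt n hnN).2
    rw [hconst n hnN] at this
    exact this
  have h2 : Bprod ρ (n+1) ≤ Bprod ρ (2*k) :=
    Bprod_anti hirr hρ (le_trans (le_max_left _ _) (Nat.le_succ _))
  have h3 : Bprod ρ (2*k) ≤ (1/2:ℝ)^k := Bprod_half hirr hρ k
  have : c0 * (1/2:ℝ)^k < d := by
    rw [lt_div_iff₀ hc0pos] at hk
    linarith [mul_comm c0 ((1/2:ℝ)^k)]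
  nlinarith

end freq
section geom

variable {ρ : ℝ} (hirr : Irrational ρ) (hρ : ρ ∈ Set.Ioo (0:ℝ) 1)

include hirr hρ in
lemma interval_bound (x0 z0 c0 : ℝ) (hc0 : 0 < c0) (n lvl i k : ℕ)
    (hP : ∀ t : ℤ, |t| ≤ 3 * (cfDen ρ (n+1) : ℤ) →
      c0 * Bprod ρ (n+1) ≤ |z0 - x0 + (t:ℝ)*ρ - round (z0 - x0 + (t:ℝ)*ρ)|)
    (hk : k ≤ cfDen ρ (n+1)) (hi : i ≤ cfDen ρ (n+1)) (hq : cfDen ρ lvl ≤ cfDen ρ (n+1))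
    (hB : Bprod ρ (lvl+1) ≤ Bprod ρ (n+1))
    (j : ℤ) (hmem : z0 + (k:ℝ)*ρ + (j:ℝ) ∈ rotElemR ρ x0 lvl i) :
    c0 ≤ (z0 + (k:ℝ)*ρ + (j:ℝ) - sInf (rotElemR ρ x0 lvl i)) /
        (sSup (rotElemR ρ x0 lvl i) - sInf (rotElemR ρ x0 lvl i)) ∧
    (z0 + (k:ℝ)*ρ + (j:ℝ) - sInf (rotElemR ρ x0 lvl i)) /
        (sSup (rotElemR ρ x0 lvl i) - sInf (rotElemR ρ x0 lvl i)) ≤ 1 - c0 := by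
  have hBn1 := Bprod_pos hirr hρ (n+1)
  set a : ℝ := x0 + (i:ℝ) * ρ with hadef
  set e : ℝ := (cfDen ρ lvl : ℝ) * ρ - round ((cfDen ρ lvl : ℝ) * ρ) with hedef
  have hJ : rotElemR ρ x0 lvl i = Set.Icc (min a (a+e)) (max a (a+e)) := by
    rw [rotElemR]
    rw [show x0 + (i:ℝ)*ρ + (cfDen ρ lvl : ℝ)*ρ - (round ((cfDen ρ lvl : ℝ)*ρ) : ℝ) = a + e
      from by rw [hadef, hedef]; ring]
    rw [Set.uIcc]
  have hInf : sInf (rotElemR ρ x0 lvl i) = min a (a+e) := by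
    rw [hJ]; exact csInf_Icc (min_le_max)
  have hSup : sSup (rotElemR ρ x0 lvl i) = max a (a+e) := by
    rw [hJ]; exact csSup_Icc (min_le_max)
  have hqpos : cfDen ρ lvl ≠ 0 := by
    have := cfDen_pos hirr hρ lvl; omega
  have he0 : e ≠ 0 := by
    have h1 : Irrational ((cfDen ρ lvl : ℝ) * ρ) := hirr.natCast_mul hqpos
    have h2 : Irrational e := h1.sub_intCast _
    exact h2.ne_zero
  have habse : |e| ≤ Bprod ρ (lvl+1) := by
    have h1 : |((cfDen ρ lvl : ℝ)) * ρ - round ((cfDen ρ lvl : ℝ) * ρ)|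
        ≤ |((cfDen ρ lvl : ℝ)) * ρ - (pNum ρ lvl : ℝ)| := round_le _ _
    have h2 : ((cfDen ρ lvl : ℝ)) * ρ - (pNum ρ lvl : ℝ) = (-1:ℝ)^lvl * Bprod ρ (lvl+1) :=
      gam_eq hirr hρ lvl
    rw [h2, abs_mul, abs_pow, abs_neg, abs_one, one_pow, one_mul,
      abs_of_pos (Bprod_pos hirr hρ (lvl+1))] at h1
    exact h1
  set P : ℝ := z0 + (k:ℝ)*ρ + (j:ℝ) with hPdef
  rw [hJ] at hmem
  obtain ⟨hm1, hm2⟩ := Set.mem_Icc.1 hmem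
  -- distance from P to a
  have h_pa : c0 * Bprod ρ (n+1) ≤ |P - a| := by
    set t : ℤ := (k:ℤ) - (i:ℤ) with htdef
    have htb : |t| ≤ 3 * (cfDen ρ (n+1) : ℤ) := by
      have h1 : (k:ℤ) ≤ (cfDen ρ (n+1) : ℤ) := by exact_mod_cast hk
      have h2 : (i:ℤ) ≤ (cfDen ρ (n+1) : ℤ) := by exact_mod_cast hi
      have h3 : (0:ℤ) ≤ (k:ℤ) := Int.natCast_nonneg k
      have h4 : (0:ℤ) ≤ (i:ℤ) := Int.natCast_nonneg i
      rw [htdef, abs_le]; omega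
    have heq : P - a = (z0 - x0 + (t:ℝ)*ρ) - ((-j : ℤ) : ℝ) := by
      rw [hPdef, hadef, htdef]; push_cast; ring
    calc c0 * Bprod ρ (n+1)
        ≤ |z0 - x0 + (t:ℝ)*ρ - round (z0 - x0 + (t:ℝ)*ρ)| := hP t htb
      _ ≤ |z0 - x0 + (t:ℝ)*ρ - ((-j : ℤ) : ℝ)| := round_le _ _
      _ = |P - a| := by rw [heq]
  have h_pb : c0 * Bprod ρ (n+1) ≤ |P - (a + e)| := by
    set t : ℤ := (k:ℤ) - (i:ℤ) - (cfDen ρ lvl : ℤ) with htdef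
    have htb : |t| ≤ 3 * (cfDen ρ (n+1) : ℤ) := by
      have h1 : (k:ℤ) ≤ (cfDen ρ (n+1) : ℤ) := by exact_mod_cast hk
      have h2 : (i:ℤ) ≤ (cfDen ρ (n+1) : ℤ) := by exact_mod_cast hi
      have h5 : (cfDen ρ lvl : ℤ) ≤ (cfDen ρ (n+1) : ℤ) := by exact_mod_cast hq
      have h3 : (0:ℤ) ≤ (k:ℤ) := Int.natCast_nonneg k
      have h4 : (0:ℤ) ≤ (i:ℤ) := Int.natCast_nonneg i
      have h6 : (0:ℤ) ≤ (cfDen ρ lvl : ℤ) := Int.natCast_nonneg _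
      rw [htdef, abs_le]; omega
    have heq : P - (a + e) = (z0 - x0 + (t:ℝ)*ρ)
        - ((-j - round ((cfDen ρ lvl : ℝ) * ρ) : ℤ) : ℝ) := by
      rw [hPdef, hadef, hedef, htdef]; push_cast; ring
    calc c0 * Bprod ρ (n+1)
        ≤ |z0 - x0 + (t:ℝ)*ρ - round (z0 - x0 + (t:ℝ)*ρ)| := hP t htb
      _ ≤ |z0 - x0 + (t:ℝ)*ρ - ((-j - round ((cfDen ρ lvl : ℝ) * ρ) : ℤ) : ℝ)| := round_le _ _
      _ = |P - (a + e)| := by rw [heq]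
  have hPm : c0 * Bprod ρ (n+1) ≤ P - min a (a+e) := by
    rcases min_choice a (a+e) with h | h <;> rw [h] <;> rw [h] at hm1
    · calc c0 * Bprod ρ (n+1) ≤ |P - a| := h_pa
        _ = P - a := abs_of_nonneg (by linarith)
    · calc c0 * Bprod ρ (n+1) ≤ |P - (a+e)| := h_pb
        _ = P - (a+e) := abs_of_nonneg (by linarith)
  have hMP : c0 * Bprod ρ (n+1) ≤ max a (a+e) - P := by
    rcases max_choice a (a+e) with h | h <;> rw [h] <;> rw [h] at hm2
    · calc c0 * Bprod ρ (n+1) ≤ |P - a| := h_pa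
        _ = -(P - a) := abs_of_nonpos (by linarith)
        _ = a - P := by ring
    · calc c0 * Bprod ρ (n+1) ≤ |P - (a+e)| := h_pb
        _ = -(P - (a+e)) := abs_of_nonpos (by linarith)
        _ = (a+e) - P := by ring
  have hw : max a (a+e) - min a (a+e) = |e| := by
    rw [max_sub_min_eq_abs]
    rw [show a + e - a = e from by ring]
  have hwpos : 0 < max a (a+e) - min a (a+e) := by
    rw [hw]; exact abs_pos.2 he0
  have hwle : max a (a+e) - min a (a+e) ≤ Bprod ρ (n+1) := by
    rw [hw]; exact le_trans habse hB
  rw [hInf, hSup]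
  constructor
  · rw [le_div_iff₀ hwpos]
    calc c0 * (max a (a+e) - min a (a+e)) ≤ c0 * Bprod ρ (n+1) := by nlinarith
      _ ≤ P - min a (a+e) := hPm
  · rw [div_le_iff₀ hwpos]
    have h1 : c0 * (max a (a+e) - min a (a+e)) ≤ c0 * Bprod ρ (n+1) := by nlinarith
    nlinarith

end geom

/-- **Lemma 4.5.** For the rotation `T_ρ` with `ρ` irrational of bounded type and `z̃₀` with
orbit disjoint from that of `x̃₀`, there is a subsequence `(n_m)` such that the barycentric
coefficients of the points `z̃_k`, `0 ≤ k < q_{n_m+1}`, in their intervals of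
`P_{n_m}(T_ρ, x̃₀)` are universally bounded in `(0,1)`. -/
theorem rotation_barycentric_bounded
    (ρ : ℝ) (hirr : Irrational ρ) (hρ : ρ ∈ Set.Ioo (0:ℝ) 1) (hbt : BoundedType ρ)
    (x0 z0 : ℝ) (hdisj : ∀ i : ℤ, ¬ ceq z0 (x0 + (i : ℝ) * ρ)) :
    ∃ nm : ℕ → ℕ, StrictMono nm ∧ ∃ c C : ℝ, 0 < c ∧ c ≤ C ∧ C < 1 ∧
      ∀ μ : ℕ, ∀ k < cfDen ρ (nm μ + 1), ∀ J : Set ℝ, IsRotPartElem ρ x0 (nm μ) J →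
        ∀ j : ℤ, (z0 + (k : ℝ) * ρ + (j : ℝ)) ∈ J →
          c ≤ (z0 + (k : ℝ) * ρ + (j : ℝ) - sInf J) / (sSup J - sInf J) ∧
          (z0 + (k : ℝ) * ρ + (j : ℝ) - sInf J) / (sSup J - sInf J) ≤ C := by
  obtain ⟨M, hM⟩ := hbt
  set c0 : ℝ := 1/(2*((M:ℝ)+1)^7) with hc0
  have hM7 : (1:ℝ) ≤ ((M:ℝ)+1)^7 := one_le_pow₀ (by linarith [Nat.cast_nonneg (α := ℝ) M])
  have hc0pos : 0 < c0 := by rw [hc0]; positivity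
  have hc0half : c0 ≤ 1/2 := by
    rw [hc0]
    rw [div_le_div_iff₀ (by positivity) (by norm_num)]
    nlinarith
  have hα : ∀ t j : ℤ, z0 - x0 + (t:ℝ) * ρ ≠ (j:ℝ) := by
    intro t j h
    exact hdisj (-t) ⟨j, by push_cast; linarith⟩
  obtain ⟨nm, hmono, hnm⟩ := extraction_of_frequently_atTop (freq_good hirr hρ hM (z0 - x0) hα)
  refine ⟨nm, hmono, c0, 1 - c0, hc0pos, by linarith, by linarith, ?_⟩
  intro μ k hk J hJ j hmem
  have hP := hnm μ
  rcases hJ with ⟨i, hi, rfl⟩ | ⟨i, hi, rfl⟩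
  · exact interval_bound hirr hρ x0 z0 c0 hc0pos (nm μ) (nm μ) i k hP (le_of_lt hk)
      (le_of_lt hi) (cfDen_mono hirr hρ (nm μ)) le_rfl j hmem
  · exact interval_bound hirr hρ x0 z0 c0 hc0pos (nm μ) (nm μ + 1) i k hP (le_of_lt hk)
      (le_trans (le_of_lt hi) (cfDen_mono hirr hρ (nm μ))) le_rfl
      (Bprod_anti hirr hρ (Nat.le_succ _)) j hmem


end
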